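/- Let (X, μ) be a measurable space with a finite measure μ and T : X → X a measurable map. Let B be a complex Banach space, L : B → B a bounded linear operator, and P : B → B a bounded linear projection (P ∘ P = P) whose range is finite dimensional and which commutes with L (L ∘ P = P ∘ L); let σ > 0 and assume that the spectral radius of the operator L ∘ (Id − P) is strictly less than σ. Let F₁ and F₂ be normed complex vector spaces, let j₁ : F₁ → (X → ℂ) and j₂ : F₂ → (X → ℂ) be linear maps, and let Φ₁ : F₁ → B and Φ₂ : F₂ → B* be bounded linear maps such that for all n ∈ ℕ, ψ₁ ∈ F₁ and ψ₂ ∈ F₂ the function x ↦ (j₁ψ₁)(x) · (j₂ψ₂)(Tⁿ x) is μ-integrable and ∫ (j₁ψ₁) · (j₂ψ₂)∘Tⁿ dμ = (Φ₂ψ₂)(Lⁿ(Φ₁ψ₁)). Then there exists a constant C > 0 such that for all n ∈ ℕ, ψ₁ ∈ F₁ and ψ₂ ∈ F₂, |∫ (j₁ψ₁) · (j₂ψ₂)∘Tⁿ dμ − (Φ₂ψ₂)(Lⁿ P (Φ₁ψ₁))| ≤ C σⁿ ‖ψ₁‖_{F₁} ‖ψ₂‖_{F₂}. (Since P has finite rank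 and commutes with L, setting F := P(B), M := the restriction of L to F, τ₁ := P ∘ Φ₁ and τ₂(ψ₂) := the restriction of Φ₂ψ₂ to F, this says the correlations ∫ ψ₁ · ψ₂∘Tⁿ dμ equal τ₂(ψ₂) Mⁿ τ₁(ψ₁) up to an error C σⁿ ‖ψ₁‖ ‖ψ₂‖.) -/

import Mathlib

open MeasureTheory

/-- From spectral radius `< σ` we get a uniform bound `‖a ^ n‖ ≤ C σ ^ n`. -/
lemma norm_pow_le_of_spectralRadius_lt {B : Type*} [NormedAddCommGroup B]
    [NormedSpace ℂ B] [CompleteSpace B] (a : B →L[ℂ] B) {σ : ℝ} (hσ : 0 < σ)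
    (hspec : spectralRadius ℂ a < ENNReal.ofReal σ) :
    ∃ C > 0, ∀ n : ℕ, ‖a ^ n‖ ≤ C * σ ^ n := by
  have htend := spectrum.pow_norm_pow_one_div_tendsto_nhds_spectralRadius a
  have hev : ∀ᶠ n : ℕ in Filter.atTop,
      ENNReal.ofReal (‖a ^ n‖ ^ (1 / n : ℝ)) < ENNReal.ofReal σ :=
    htend.eventually_lt_const hspec
  rw [Filter.eventually_atTop] at hev
  obtain ⟨N, hN⟩ := hev
  have key : ∀ n : ℕ, N + 1 ≤ n → ‖a ^ n‖ ≤ σ ^ n := by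
    intro n hn
    have hn1 : 1 ≤ n := le_trans (Nat.le_add_left 1 N) hn
    have h := hN n (le_trans (Nat.le_succ N) hn)
    rw [ENNReal.ofReal_lt_ofReal_iff hσ] at h
    have hpos : (0 : ℝ) < (n : ℝ) := by exact_mod_cast hn1
    have := Real.rpow_le_rpow (Real.rpow_nonneg (norm_nonneg _) _) h.le (le_of_lt hpos)
    rwa [← Real.rpow_mul (norm_nonneg _), one_div,
      inv_mul_cancel₀ (ne_of_gt hpos), Real.rpow_one, Real.rpow_natCast σ] at this
  obtain ⟨C, hC⟩ : ∃ C : ℝ, C = 1 + ∑ k ∈ Finset.range (N + 1), ‖a ^ k‖ / σ ^ k := ⟨_, rfl⟩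
  have hsum : (0 : ℝ) ≤ ∑ k ∈ Finset.range (N + 1), ‖a ^ k‖ / σ ^ k :=
    Finset.sum_nonneg fun k _ => div_nonneg (norm_nonneg _) (pow_nonneg hσ.le _)
  have hCpos : 0 < C := by linarith
  refine ⟨C, hCpos, fun n => ?_⟩
  rcases lt_or_ge n (N + 1) with h | h
  · have hmem : n ∈ Finset.range (N + 1) := Finset.mem_range.mpr h
    have h1 : ‖a ^ n‖ / σ ^ n ≤ C := by
      have := Finset.single_le_sum
        (f := fun k => ‖a ^ k‖ / σ ^ k)
        (fun k _ => div_nonneg (norm_nonneg _) (pow_nonneg hσ.le _)) hmem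
      linarith
    calc ‖a ^ n‖ = ‖a ^ n‖ / σ ^ n * σ ^ n := by
          field_simp
      _ ≤ C * σ ^ n := by
          exact mul_le_mul_of_nonneg_right h1 (pow_nonneg hσ.le _)
  · calc ‖a ^ n‖ ≤ σ ^ n := key n h
      _ = 1 * σ ^ n := (one_mul _).symm
      _ ≤ C * σ ^ n := by
          apply mul_le_mul_of_nonneg_right _ (pow_nonneg hσ.le _)
          linarith

/-- If the correlations of a measure-preserving-type system are computed by
a bounded operator `L` on a complex Banach space `B` together with a finite-rank projection
`P` commuting with `L` such that `L ∘ (Id − P)` has spectral radius `< σ`, then the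
correlations are described by the finite-dimensional part `Lⁿ P` up to an error
`C σⁿ ‖ψ₁‖ ‖ψ₂‖`. -/
theorem stmt1 {X : Type*} [MeasurableSpace X] (μ : Measure X) [IsFiniteMeasure μ]
    (T : X → X) (hT : Measurable T)
    {B : Type*} [NormedAddCommGroup B] [NormedSpace ℂ B] [CompleteSpace B]
    (L P : B →L[ℂ] B) (hPP : P ∘L P = P)
    (hfin : FiniteDimensional ℂ (LinearMap.range (P : B →ₗ[ℂ] B)))
    (hcomm : L ∘L P = P ∘L L)
    (σ : ℝ) (hσ : 0 < σ)
    (hspec : spectralRadius ℂ (L ∘L (ContinuousLinearMap.id ℂ B - P)) < ENNReal.ofReal σ)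
    {F₁ F₂ : Type*} [NormedAddCommGroup F₁] [NormedSpace ℂ F₁]
    [NormedAddCommGroup F₂] [NormedSpace ℂ F₂]
    (j₁ : F₁ →ₗ[ℂ] (X → ℂ)) (j₂ : F₂ →ₗ[ℂ] (X → ℂ))
    (Φ₁ : F₁ →L[ℂ] B) (Φ₂ : F₂ →L[ℂ] (B →L[ℂ] ℂ))
    (hint : ∀ (n : ℕ) (ψ₁ : F₁) (ψ₂ : F₂),
      Integrable (fun x => j₁ ψ₁ x * j₂ ψ₂ (T^[n] x)) μ)
    (hcorr : ∀ (n : ℕ) (ψ₁ : F₁) (ψ₂ : F₂),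
      (∫ x, j₁ ψ₁ x * j₂ ψ₂ (T^[n] x) ∂μ) = Φ₂ ψ₂ ((L ^ n) (Φ₁ ψ₁))) :
    ∃ C > 0, ∀ (n : ℕ) (ψ₁ : F₁) (ψ₂ : F₂),
      ‖(∫ x, j₁ ψ₁ x * j₂ ψ₂ (T^[n] x) ∂μ) - Φ₂ ψ₂ ((L ^ n) (P (Φ₁ ψ₁)))‖
        ≤ C * σ ^ n * ‖ψ₁‖ * ‖ψ₂‖ := by
  set A : B →L[ℂ] B := L ∘L (ContinuousLinearMap.id ℂ B - P) with hA
  obtain ⟨C₀, hC₀pos, hC₀⟩ := norm_pow_le_of_spectralRadius_lt A hσ hspec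
  -- pointwise: if `P w = 0` then `L ^ n w = A ^ n w` and `P (A ^ n w) = 0`
  have hPL : ∀ w : B, P (L w) = L (P w) := fun w =>
    (congrFun (congrArg DFunLike.coe hcomm.symm) w : _)
  have step : ∀ w : B, P w = 0 → A w = L w ∧ P (A w) = 0 := by
    intro w hw
    have h1 : A w = L w := by simp [hA, hw]
    refine ⟨h1, ?_⟩
    rw [h1, hPL, hw, map_zero]
  have key : ∀ (n : ℕ) (w : B), P w = 0 → (L ^ n) w = (A ^ n) w ∧ P ((A ^ n) w) = 0 := by
    intro n
    induction n with
    | zero => intro w hw; simpa using hw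
    | succ n ih =>
      intro w hw
      obtain ⟨h1, h2⟩ := ih w hw
      obtain ⟨h3, h4⟩ := step _ h2
      constructor
      · rw [pow_succ', pow_succ']
        simp only [ContinuousLinearMap.mul_apply]
        rw [h1, h3]
      · rw [pow_succ']
        simpa using h4
  refine ⟨C₀ * ‖Φ₂‖ * (1 + ‖ContinuousLinearMap.id ℂ B - P‖) * (1 + ‖Φ₁‖) + C₀,
    by positivity, fun n ψ₁ ψ₂ => ?_⟩
  rw [hcorr n ψ₁ ψ₂]
  set v : B := (ContinuousLinearMap.id ℂ B - P) (Φ₁ ψ₁) with hv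
  have hPv : P v = 0 := by
    have := congrFun (congrArg DFunLike.coe hPP) (Φ₁ ψ₁)
    simp only [ContinuousLinearMap.comp_apply] at this
    simp [hv, this]
  have hdiff : (L ^ n) (Φ₁ ψ₁) - (L ^ n) (P (Φ₁ ψ₁)) = (A ^ n) v := by
    rw [← (key n v hPv).1, hv]
    simp [map_sub]
  have : Φ₂ ψ₂ ((L ^ n) (Φ₁ ψ₁)) - Φ₂ ψ₂ ((L ^ n) (P (Φ₁ ψ₁))) = Φ₂ ψ₂ ((A ^ n) v) := by
    rw [← map_sub, hdiff]
  rw [this]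
  have hvnorm : ‖v‖ ≤ ‖ContinuousLinearMap.id ℂ B - P‖ * ‖Φ₁‖ * ‖ψ₁‖ := by
    calc ‖v‖ ≤ ‖ContinuousLinearMap.id ℂ B - P‖ * ‖Φ₁ ψ₁‖ :=
          ContinuousLinearMap.le_opNorm _ _
      _ ≤ ‖ContinuousLinearMap.id ℂ B - P‖ * (‖Φ₁‖ * ‖ψ₁‖) :=
          mul_le_mul_of_nonneg_left (ContinuousLinearMap.le_opNorm _ _) (norm_nonneg _)
      _ = ‖ContinuousLinearMap.id ℂ B - P‖ * ‖Φ₁‖ * ‖ψ₁‖ := by ring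
  calc ‖Φ₂ ψ₂ ((A ^ n) v)‖ ≤ ‖Φ₂ ψ₂‖ * ‖(A ^ n) v‖ := ContinuousLinearMap.le_opNorm _ _
    _ ≤ (‖Φ₂‖ * ‖ψ₂‖) * (‖A ^ n‖ * ‖v‖) :=
        mul_le_mul (ContinuousLinearMap.le_opNorm _ _) (ContinuousLinearMap.le_opNorm _ _)
          (norm_nonneg _) (by positivity)
    _ ≤ (‖Φ₂‖ * ‖ψ₂‖) * ((C₀ * σ ^ n) * (‖ContinuousLinearMap.id ℂ B - P‖ * ‖Φ₁‖ * ‖ψ₁‖)) := by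
        apply mul_le_mul_of_nonneg_left _ (by positivity)
        exact mul_le_mul (hC₀ n) hvnorm (norm_nonneg _) (by positivity)
    _ = (‖Φ₂‖ * C₀ * (‖ContinuousLinearMap.id ℂ B - P‖ * ‖Φ₁‖))
          * (σ ^ n * ‖ψ₁‖ * ‖ψ₂‖) := by ring
    _ ≤ (C₀ * ‖Φ₂‖ * (1 + ‖ContinuousLinearMap.id ℂ B - P‖) * (1 + ‖Φ₁‖) + C₀)
          * (σ ^ n * ‖ψ₁‖ * ‖ψ₂‖) := by
        apply mul_le_mul_of_nonneg_right _ (by positivity)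
        have hx : ‖ContinuousLinearMap.id ℂ B - P‖ * ‖Φ₁‖
            ≤ (1 + ‖ContinuousLinearMap.id ℂ B - P‖) * (1 + ‖Φ₁‖) := by
          nlinarith [norm_nonneg (ContinuousLinearMap.id ℂ B - P), norm_nonneg Φ₁]
        have hy := mul_le_mul_of_nonneg_left hx
          (mul_nonneg hC₀pos.le (norm_nonneg Φ₂))
        nlinarith [hC₀pos]
    _ = (C₀ * ‖Φ₂‖ * (1 + ‖ContinuousLinearMap.id ℂ B - P‖) * (1 + ‖Φ₁‖) + C₀)
          * σ ^ n * ‖ψ₁‖ * ‖ψ₂‖ := by ring
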